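/- Under the setup of the direct coupled observer (A_p = 0, R_o > 0 symmetric 2×2, R_c = C_p^T β with β nonzero, C_o R_o^{-1} β^T = -1), the solutions of the augmented linear system ẋ_p = 2J C_p^T β x_o, ẋ_o = 2J(β^T C_p x_p + R_o x_o) satisfy lim_{T→∞} (1/T) ∫₀^T (C_p x_p(0) - C_o x_o(t)) dt = 0. -/

import Mathlib

open Matrix Filter

private lemma hda_mulVec {m n : ℕ} (M : Matrix (Fin m) (Fin n) ℝ)
    {f : ℝ → Fin n → ℝ} {f' : Fin n → ℝ} {t : ℝ} (hf : HasDerivAt f f' t) :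
    HasDerivAt (fun s => M.mulVec (f s)) (M.mulVec f') t := by
  rw [hasDerivAt_pi] at hf ⊢
  intro i
  simpa [Matrix.mulVec, dotProduct] using
    HasDerivAt.fun_sum (fun j _ => ((hf j).const_mul (M i j)))

private lemma hda_dot {n : ℕ} {f g : ℝ → Fin n → ℝ} {f' g' : Fin n → ℝ} {t : ℝ}
    (hf : HasDerivAt f f' t) (hg : HasDerivAt g g' t) :
    HasDerivAt (fun s => f s ⬝ᵥ g s) (f' ⬝ᵥ g t + f t ⬝ᵥ g') t := by
  rw [hasDerivAt_pi] at hf hg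
  simpa [dotProduct, Finset.sum_add_distrib] using
    HasDerivAt.fun_sum (fun j (_ : j ∈ Finset.univ) => ((hf j).mul (hg j)))

theorem stmt_13 (Ro : Matrix (Fin 2) (Fin 2) ℝ) (hsym : Ro.IsSymm) (hpos : Ro.PosDef)
    (Cp β Co : Matrix (Fin 1) (Fin 2) ℝ) (hβ : β ≠ 0)
    (hCo : Co * Ro⁻¹ * βᵀ = -1)
    (J : Matrix (Fin 2) (Fin 2) ℝ) (hJ : J = !![0, 1; -1, 0])
    (xp xo : ℝ → Fin 2 → ℝ)
    (hxp : ∀ t, HasDerivAt xp (((2 : ℝ) • (J * (Cpᵀ * β))).mulVec (xo t)) t)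
    (hxo : ∀ t, HasDerivAt xo
      (((2 : ℝ) • J).mulVec ((βᵀ * Cp).mulVec (xp t) + Ro.mulVec (xo t))) t) :
    Tendsto (fun T : ℝ =>
        (1 / T) * ∫ t in (0 : ℝ)..T, (Cp.mulVec (xp 0) 0 - Co.mulVec (xo t) 0))
      atTop (nhds 0) := by
  subst hJ
  have hdet : Ro.det ≠ 0 := hpos.det_pos.ne'
  have hRoinv : Ro * Ro⁻¹ = 1 := Matrix.mul_nonsing_inv Ro (isUnit_iff_ne_zero.mpr hdet)
  -- Step 1 : Cp xp constant
  have hCpJ : Cp * ((2 : ℝ) • (!![0, 1; -1, 0] * (Cpᵀ * β))) = 0 := by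
    ext i j
    fin_cases i <;> fin_cases j <;>
      · simp [Matrix.mul_apply, Matrix.vecMul, dotProduct,
          Matrix.transpose_apply, Fin.sum_univ_two]
        ring
  have hP : ∀ t, Cp.mulVec (xp t) = Cp.mulVec (xp 0) := by
    have hd : ∀ t, HasDerivAt (fun s => Cp.mulVec (xp s)) 0 t := by
      intro t
      have H := hda_mulVec Cp (hxp t)
      rwa [Matrix.mulVec_mulVec, hCpJ, Matrix.zero_mulVec] at H
    intro t
    exact is_const_of_deriv_eq_zero (fun s => (hd s).differentiableAt)
      (fun s => (hd s).deriv) t 0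
  -- Step 2: shifted variable y with linear ODE
  set c0 : Fin 2 → ℝ := Ro⁻¹.mulVec ((βᵀ * Cp).mulVec (xp 0)) with hc0
  set A : Matrix (Fin 2) (Fin 2) ℝ := (2 : ℝ) • (!![0, 1; -1, 0] * Ro) with hA
  set y : ℝ → Fin 2 → ℝ := fun t => xo t + c0 with hy
  have hRoc0 : Ro.mulVec c0 = (βᵀ * Cp).mulVec (xp 0) := by
    rw [hc0, Matrix.mulVec_mulVec, hRoinv, Matrix.one_mulVec]
  have hy' : ∀ t, HasDerivAt y (A.mulVec (y t)) t := by
    intro t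
    have H := (hxo t).add_const c0
    refine H.congr_deriv (Eq.symm ?_)
    rw [hy]
    have h1 : (βᵀ * Cp).mulVec (xp t) = Ro.mulVec c0 := by
      rw [hRoc0, ← Matrix.mulVec_mulVec, hP t, Matrix.mulVec_mulVec]
    rw [h1, ← Matrix.mulVec_add, Matrix.mulVec_mulVec, smul_mul_assoc, add_comm c0]
  -- invertibility of A
  have hdetA : IsUnit A.det := by
    have : A.det = (2 : ℝ) ^ 2 * ((1 : ℝ) * Ro.det) := by
      rw [hA, Matrix.det_smul, Matrix.det_mul]
      norm_num [Matrix.det_fin_two_of]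
    rw [isUnit_iff_ne_zero, this]
    positivity
  have hAinv : Co * A⁻¹ * A = Co := by
    rw [Matrix.mul_assoc, Matrix.nonsing_inv_mul A hdetA, Matrix.mul_one]
  -- the antiderivative h
  set h : ℝ → ℝ := fun t => ((Co * A⁻¹).mulVec (y t)) 0 with hhdef
  have hh' : ∀ t, HasDerivAt h ((Co.mulVec (y t)) 0) t := by
    intro t
    have H := hasDerivAt_pi.mp (hda_mulVec (Co * A⁻¹) (hy' t)) 0
    rwa [Matrix.mulVec_mulVec, hAinv] at H
  -- integrand = -(h' t)
  have hg : ∀ t, Cp.mulVec (xp 0) 0 - Co.mulVec (xo t) 0 = -((Co.mulVec (y t)) 0) := by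
    intro t
    have h1 : Co.mulVec c0 = -(Cp.mulVec (xp 0)) := by
      have h2 : Co.mulVec c0 = ((Co * Ro⁻¹ * βᵀ) * Cp).mulVec (xp 0) := by
        rw [hc0, Matrix.mulVec_mulVec, Matrix.mulVec_mulVec, Matrix.mul_assoc,
          Matrix.mul_assoc, Matrix.mul_assoc]
      rw [h2, hCo, Matrix.neg_mul, Matrix.one_mul, Matrix.neg_mulVec]
    have h3 : Co.mulVec (y t) = Co.mulVec (xo t) + Co.mulVec c0 := by
      rw [hy, ← Matrix.mulVec_add]
    have := congrFun h3 0
    have := congrFun h1 0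
    simp only [Pi.add_apply, Pi.neg_apply] at *
    linarith
  -- energy conservation
  have hb : Ro 1 0 = Ro 0 1 := hsym.apply 0 1
  have hV : ∀ t, y t ⬝ᵥ Ro.mulVec (y t) = y 0 ⬝ᵥ Ro.mulVec (y 0) := by
    have hd : ∀ t, HasDerivAt (fun s => y s ⬝ᵥ Ro.mulVec (y s)) 0 t := by
      intro t
      have H := hda_dot (hy' t) (hda_mulVec Ro (hy' t))
      convert H using 1
      simp [hA, Matrix.mulVec, Matrix.vecMul, dotProduct, Fin.sum_univ_two, Matrix.mul_apply]
      rw [hb]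
      ring
    intro t
    exact is_const_of_deriv_eq_zero (fun s => (hd s).differentiableAt)
      (fun s => (hd s).deriv) t 0
  -- positivity facts about Ro
  have ha : 0 < Ro 0 0 := by
    have h1 := hpos.dotProduct_mulVec_pos (x := ![1, 0]) (by intro hc; simpa using congrFun hc 0)
    simpa [dotProduct, Matrix.mulVec, Fin.sum_univ_two] using h1
  have hc : 0 < Ro 1 1 := by
    have h1 := hpos.dotProduct_mulVec_pos (x := ![0, 1]) (by intro hc; simpa using congrFun hc 1)
    simpa [dotProduct, Matrix.mulVec, Fin.sum_univ_two] using h1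
  have hD : 0 < Ro 0 0 * Ro 1 1 - Ro 0 1 * Ro 0 1 := by
    have h2 := hpos.det_pos
    rw [Matrix.det_fin_two, hb] at h2
    linarith
  set V0 : ℝ := y 0 ⬝ᵥ Ro.mulVec (y 0) with hV0def
  set K : ℝ := (Ro 0 0 + Ro 1 1) * V0 / (Ro 0 0 * Ro 1 1 - Ro 0 1 * Ro 0 1) with hK
  set B : ℝ := Real.sqrt K with hB
  have hBnn : 0 ≤ B := Real.sqrt_nonneg _
  have hyb : ∀ t i, |y t i| ≤ B := by
    intro t i
    have hVt := hV t
    have hexp : Ro 0 0 * (y t 0) ^ 2 + 2 * Ro 0 1 * (y t 0) * (y t 1)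
        + Ro 1 1 * (y t 1) ^ 2 = V0 := by
      rw [← hVt]
      simp [dotProduct, Matrix.mulVec, Fin.sum_univ_two, hb]
      ring
    have hsq : (y t i) ^ 2 ≤ K := by
      rw [hK, le_div_iff₀ hD]
      have hi : i = 0 ∨ i = 1 := by fin_cases i <;> [exact Or.inl rfl; exact Or.inr rfl]
      rcases hi with hi | hi <;> rw [hi] <;>
        nlinarith [sq_nonneg (Ro 0 0 * y t 0 + Ro 0 1 * y t 1),
          sq_nonneg (Ro 0 1 * y t 0 + Ro 1 1 * y t 1), sq_nonneg (y t 0), sq_nonneg (y t 1)]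
    calc |y t i| = Real.sqrt ((y t i) ^ 2) := (Real.sqrt_sq_eq_abs _).symm
      _ ≤ B := Real.sqrt_le_sqrt hsq
  -- bound on h
  set M : ℝ := (|(Co * A⁻¹) 0 0| + |(Co * A⁻¹) 0 1|) * B with hM
  have hM0 : 0 ≤ M :=
    mul_nonneg (add_nonneg (abs_nonneg _) (abs_nonneg _)) hBnn
  have hhb : ∀ t, |h t| ≤ M := by
    intro t
    have h0 : h t = (Co * A⁻¹) 0 0 * y t 0 + (Co * A⁻¹) 0 1 * y t 1 := by
      rw [hhdef]
      simp [Matrix.mulVec, dotProduct, Fin.sum_univ_two]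
    rw [h0, hM]
    have h01 := abs_add_le ((Co * A⁻¹) 0 0 * y t 0) ((Co * A⁻¹) 0 1 * y t 1)
    rw [abs_mul, abs_mul] at h01
    refine h01.trans ?_
    have e0 : |(Co * A⁻¹) 0 0| * |y t 0| ≤ |(Co * A⁻¹) 0 0| * B :=
      mul_le_mul_of_nonneg_left (hyb t 0) (abs_nonneg _)
    have e1 : |(Co * A⁻¹) 0 1| * |y t 1| ≤ |(Co * A⁻¹) 0 1| * B :=
      mul_le_mul_of_nonneg_left (hyb t 1) (abs_nonneg _)
    calc |(Co * A⁻¹) 0 0| * |y t 0| + |(Co * A⁻¹) 0 1| * |y t 1|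
        ≤ |(Co * A⁻¹) 0 0| * B + |(Co * A⁻¹) 0 1| * B := add_le_add e0 e1
      _ = (|(Co * A⁻¹) 0 0| + |(Co * A⁻¹) 0 1|) * B := by ring
  -- continuity of the integrand
  have hyd : Differentiable ℝ y := fun t => (hy' t).differentiableAt
  have hyc : Continuous y := hyd.continuous
  have hcont : Continuous fun t => (Co.mulVec (y t)) 0 := by
    have hrw : (fun t => (Co.mulVec (y t)) 0)
        = fun t => Co 0 0 * y t 0 + Co 0 1 * y t 1 := by
      funext t
      simp [Matrix.mulVec, dotProduct, Fin.sum_univ_two]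
    rw [hrw]
    exact (continuous_const.mul ((continuous_apply 0).comp hyc)).add
      (continuous_const.mul ((continuous_apply 1).comp hyc))
  -- fundamental theorem of calculus
  have hint : ∀ T : ℝ,
      (∫ t in (0 : ℝ)..T, (Cp.mulVec (xp 0) 0 - Co.mulVec (xo t) 0)) = h 0 - h T := by
    intro T
    have heq : ∀ t ∈ Set.uIcc (0 : ℝ) T,
        HasDerivAt (fun s => -(h s)) (Cp.mulVec (xp 0) 0 - Co.mulVec (xo t) 0) t := by
      intro t _
      rw [hg t]
      exact (hh' t).neg
    have hii : IntervalIntegrable (fun t => Cp.mulVec (xp 0) 0 - Co.mulVec (xo t) 0)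
        MeasureTheory.volume 0 T := by
      apply Continuous.intervalIntegrable
      have hrw : (fun t => Cp.mulVec (xp 0) 0 - Co.mulVec (xo t) 0)
          = fun t => -((Co.mulVec (y t)) 0) := funext hg
      rw [hrw]
      exact hcont.neg
    have := intervalIntegral.integral_eq_sub_of_hasDerivAt heq hii
    rw [this]
    ring
  -- the limit
  apply squeeze_zero_norm' (a := fun T : ℝ => 2 * M * T⁻¹)
  · filter_upwards [eventually_gt_atTop (0 : ℝ)] with T hT
    rw [hint T, Real.norm_eq_abs, abs_mul, abs_of_pos (by positivity : (0 : ℝ) < 1 / T)]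
    have h1 : |h 0 - h T| ≤ 2 * M := by
      have hb0 := hhb 0
      have hbT := hhb T
      have htr : |h 0 - h T| ≤ |h 0| + |h T| := abs_sub _ _
      linarith
    calc 1 / T * |h 0 - h T| ≤ 1 / T * (2 * M) :=
          mul_le_mul_of_nonneg_left h1 (by positivity)
      _ = 2 * M * T⁻¹ := by ring
  · simpa using tendsto_inv_atTop_zero.const_mul (2 * M)
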